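/- Let Φ : I → ℝ be a convex function on an interval I of positive real numbers, let T, V be bounded linear invertible operators on a complex Hilbert space H, and let 0 < m < M with [m², M²] contained in the interior of I and m‖Tx‖ ≤ ‖Vx‖ ≤ M‖Tx‖ for all x ∈ H. Then for every subgradient selection φ of Φ and every t in the interior of I, one has ⊙_Φ(V,T) ≥ Φ(t)|T|² + φ(t)(|V|² − t|T|²) in the operator order. -/

import Mathlib

variable {H : Type*} [NormedAddCommGroup H] [InnerProductSpace ℂ H] [CompleteSpace H]

/-- `X = |VT⁻¹|² = (T*)⁻¹ V* V T⁻¹`. -/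
noncomputable def qX (V T : (H →L[ℂ] H)ˣ) : H →L[ℂ] H :=
  star (↑(T⁻¹) : H →L[ℂ] H) * (star (V : H →L[ℂ] H) * (V : H →L[ℂ] H)) * (↑(T⁻¹) : H →L[ℂ] H)

/-- The quadratic operator perspective `⊙_Φ(V,T) = T* Φ(X) T`. -/
noncomputable def qPersp (Φ : ℝ → ℝ) (V T : (H →L[ℂ] H)ˣ) : H →L[ℂ] H :=
  star (T : H →L[ℂ] H) * cfc Φ (qX V T) * (T : H →L[ℂ] H)

/-- `|T|² = T*T`. -/
noncomputable def modSq (T : (H →L[ℂ] H)ˣ) : H →L[ℂ] H :=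
  star (T : H →L[ℂ] H) * (T : H →L[ℂ] H)

open scoped InnerProductSpace in
theorem stmt1 (I : Set ℝ) (hIpos : I ⊆ Set.Ioi 0)
    (Φ : ℝ → ℝ) (hΦ : ConvexOn ℝ I Φ)
    (T V : (H →L[ℂ] H)ˣ) (m M : ℝ) (hm : 0 < m) (hmM : m < M)
    (hsub : Set.Icc (m ^ 2) (M ^ 2) ⊆ interior I)
    (hTV : ∀ x : H, m * ‖(T : H →L[ℂ] H) x‖ ≤ ‖(V : H →L[ℂ] H) x‖ ∧ ‖(V : H →L[ℂ] H) x‖ ≤ M * ‖(T : H →L[ℂ] H) x‖)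
    (φ : ℝ → ℝ) (hφ : ∀ a ∈ interior I, ∀ t ∈ I, Φ a + (t - a) * φ a ≤ Φ t)
    (t : ℝ) (ht : t ∈ interior I) :
    Φ t • modSq T + φ t • (modSq V - t • modSq T) ≤ qPersp Φ V T := by
  set X : H →L[ℂ] H := qX V T with hX
  have hXsa : IsSelfAdjoint X := by
    simp only [hX, qX, IsSelfAdjoint, star_mul, star_star, mul_assoc]
  -- inner product formula
  have hinner : ∀ x : H, RCLike.re (⟪X x, x⟫_ℂ) =
      ‖(V : H →L[ℂ] H) ((↑(T⁻¹) : H →L[ℂ] H) x)‖ ^ 2 := by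
    intro x
    have h1 : X x = star (↑(T⁻¹) : H →L[ℂ] H)
        ((star (V : H →L[ℂ] H) * (V : H →L[ℂ] H)) ((↑(T⁻¹) : H →L[ℂ] H) x)) := rfl
    rw [h1, ContinuousLinearMap.star_eq_adjoint, ContinuousLinearMap.adjoint_inner_left]
    rw [ContinuousLinearMap.mul_apply, ContinuousLinearMap.star_eq_adjoint,
      ContinuousLinearMap.adjoint_inner_left]
    exact inner_self_eq_norm_sq _
  have hTinv : ∀ x : H, (↑T : H →L[ℂ] H) ((↑(T⁻¹) : H →L[ℂ] H) x) = x := by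
    intro x
    calc (↑T : H →L[ℂ] H) ((↑(T⁻¹) : H →L[ℂ] H) x) = ((↑T : H →L[ℂ] H) * (↑(T⁻¹) : H →L[ℂ] H)) x := rfl
      _ = (1 : H →L[ℂ] H) x := by rw [T.mul_inv]
      _ = x := rfl
  have hbnd : ∀ x : H, m ^ 2 * ‖x‖ ^ 2 ≤ RCLike.re (⟪X x, x⟫_ℂ) ∧
      RCLike.re (⟪X x, x⟫_ℂ) ≤ M ^ 2 * ‖x‖ ^ 2 := by
    intro x
    have h := hTV ((↑(T⁻¹) : H →L[ℂ] H) x)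
    rw [hTinv x] at h
    rw [hinner x]
    constructor
    · have := pow_le_pow_left₀ (by positivity) h.1 2
      rwa [mul_pow] at this
    · have := pow_le_pow_left₀ (by positivity) h.2 2
      rwa [mul_pow] at this
  have hsa1 : ∀ r : ℝ, IsSelfAdjoint (algebraMap ℝ (H →L[ℂ] H) r) := by
    intro r
    exact IsSelfAdjoint.algebraMap _ (star_trivial r)
  have hre1 : ∀ (r : ℝ) (x : H), RCLike.re (⟪(algebraMap ℝ (H →L[ℂ] H) r) x, x⟫_ℂ) = r * ‖x‖ ^ 2 := by
    intro r x
    have h1 : (algebraMap ℝ (H →L[ℂ] H) r) x = (r : ℂ) • x := by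
      rw [Algebra.algebraMap_eq_smul_one]
      show r • x = (r : ℂ) • x
      simp
    rw [h1, inner_smul_left]
    simp [inner_self_eq_norm_sq]
    exact Or.inl (by norm_cast)
  have hlow : algebraMap ℝ (H →L[ℂ] H) (m ^ 2) ≤ X := by
    rw [ContinuousLinearMap.le_def]
    refine ⟨ContinuousLinearMap.isSelfAdjoint_iff_isSymmetric.mp (hXsa.sub (hsa1 _)), fun x => ?_⟩
    have hb := (hbnd x).1
    rw [ContinuousLinearMap.reApplyInnerSelf_apply, ContinuousLinearMap.sub_apply,
      inner_sub_left, map_sub, hre1]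
    linarith
  have hup : X ≤ algebraMap ℝ (H →L[ℂ] H) (M ^ 2) := by
    rw [ContinuousLinearMap.le_def]
    refine ⟨ContinuousLinearMap.isSelfAdjoint_iff_isSymmetric.mp ((hsa1 _).sub hXsa), fun x => ?_⟩
    have hb := (hbnd x).2
    rw [ContinuousLinearMap.reApplyInnerSelf_apply, ContinuousLinearMap.sub_apply,
      inner_sub_left, map_sub, hre1]
    linarith
  have hspec : spectrum ℝ X ⊆ Set.Icc (m ^ 2) (M ^ 2) := fun s hs =>
    ⟨(algebraMap_le_iff_le_spectrum hXsa).mp hlow s hs,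
     (le_algebraMap_iff_spectrum_le hXsa).mp hup s hs⟩
  have hspec' : spectrum ℝ X ⊆ interior I := fun s hs => hsub (hspec hs)
  have hΦcont : ContinuousOn Φ (spectrum ℝ X) := hΦ.continuousOn_interior.mono hspec'
  have hineq : cfc (fun s => Φ t + φ t * (s - t)) X ≤ cfc Φ X := by
    refine cfc_mono (fun s hs => ?_) (by fun_prop) hΦcont
    have := hφ t ht s (interior_subset (hspec' hs))
    linarith [this]
  have haff : cfc (fun s => Φ t + φ t * (s - t)) X
      = Φ t • (1 : H →L[ℂ] H) + φ t • (X - t • (1 : H →L[ℂ] H)) := by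
    rw [cfc_const_add _ _ _ (by fun_prop) hXsa,
      cfc_const_mul _ _ _ (by fun_prop),
      cfc_sub _ _ _ (by fun_prop) (by fun_prop),
      cfc_id' ℝ X hXsa, cfc_const _ _ hXsa,
      Algebra.algebraMap_eq_smul_one, Algebra.algebraMap_eq_smul_one]
  have hconj := star_left_conjugate_le_conjugate (haff ▸ hineq) (↑T : H →L[ℂ] H)
  have hTT : star (↑T : H →L[ℂ] H) * star (↑(T⁻¹) : H →L[ℂ] H) = 1 := by
    rw [← star_mul]
    have : (↑(T⁻¹) : H →L[ℂ] H) * ↑T = 1 := T.inv_mul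
    rw [this, star_one]
  have hT'T : (↑(T⁻¹) : H →L[ℂ] H) * (↑T : H →L[ℂ] H) = 1 := T.inv_mul
  have hTXT : star (↑T : H →L[ℂ] H) * X * (↑T : H →L[ℂ] H) = modSq V := by
    simp only [hX, qX, modSq, ← mul_assoc]
    rw [hTT, one_mul, mul_assoc, hT'T, mul_one]
  have hLHS : star (↑T : H →L[ℂ] H) * (Φ t • (1 : H →L[ℂ] H) + φ t • (X - t • (1 : H →L[ℂ] H))) * (↑T : H →L[ℂ] H)
      = Φ t • modSq T + φ t • (modSq V - t • modSq T) := by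
    simp only [mul_add, add_mul, mul_sub, sub_mul, mul_smul_comm,
      smul_mul_assoc, mul_one]
    rw [hTXT]
    rfl
  calc Φ t • modSq T + φ t • (modSq V - t • modSq T)
      = star (↑T : H →L[ℂ] H) * (Φ t • (1 : H →L[ℂ] H) + φ t • (X - t • (1 : H →L[ℂ] H))) * (↑T : H →L[ℂ] H) := hLHS.symm
    _ ≤ star (↑T : H →L[ℂ] H) * cfc Φ X * (↑T : H →L[ℂ] H) := hconj
    _ = qPersp Φ V T := rfl
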